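/- Let E be a real inner product space, let L ≥ 0 and σ_g ≥ 0, let N ≥ 2, K ≥ 1 and 1 ≤ s ≤ N be natural numbers, and let F_1, …, F_N : E → ℝ be differentiable functions each of whose gradient ∇F_i is L-Lipschitz, with average F := (1/N) Σ_{i=1}^N F_i. Suppose that at the point y ∈ E one has ‖∇F_i(y) − ∇F(y)‖² ≤ σ_g² for every i. Then for any family of points x_{i,k} ∈ E (i ∈ {1,…,N}, k ∈ {1,…,K}), averaging uniformly over all subsets S of {1,…,N} of cardinality s: (1 / C(N,s)) Σ_{S ⊆ {1,…,N}, |S| = s} ‖ (1/(K s)) Σ_{i∈S} Σ_{k=1}^K ∇F_i(x_{i,k}) ‖² ≤ (2 L²/(K N)) Σ_{i=1}^N Σ_{k=1}^K ‖x_{i,k} − y‖² + 8 ‖∇F(y)‖² + (4 (1 − s/N)/s) σ_g². -/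

import Mathlib

open Finset

lemma filter_mem_powersetCard (B : Finset ℕ) {i : ℕ} (hi : i ∈ B) (r : ℕ) :
    (B.powersetCard (r+1)).filter (fun S => i ∈ S) =
      ((B.erase i).powersetCard r).image (insert i) := by
  ext S
  simp only [mem_filter, mem_powersetCard, mem_image]
  constructor
  · rintro ⟨⟨hSB, hcard⟩, hiS⟩
    refine ⟨S.erase i, ⟨erase_subset_erase _ hSB, ?_⟩, insert_erase hiS⟩
    rw [card_erase_of_mem hiS, hcard]; rfl
  · rintro ⟨T, ⟨hTB, hTc⟩, rfl⟩
    have hiT : i ∉ T := fun h => (mem_erase.mp (hTB h)).1 rfl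
    refine ⟨⟨?_, ?_⟩, mem_insert_self _ _⟩
    · intro a ha
      rcases mem_insert.mp ha with rfl | h
      · exact hi
      · exact (erase_subset _ _) (hTB h)
    · rw [card_insert_of_notMem hiT, hTc]

lemma insert_injOn_powersetCard (B : Finset ℕ) (i : ℕ) (r : ℕ) (hiB : i ∉ B) :
    Set.InjOn (insert i) (B.powersetCard r : Set (Finset ℕ)) := by
  intro S hS T hT h
  simp only [Finset.mem_coe, mem_powersetCard] at hS hT
  have hiS : i ∉ S := fun hm => hiB (hS.1 hm)
  have hiT : i ∉ T := fun hm => hiB (hT.1 hm)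
  rw [← erase_insert hiS, ← erase_insert hiT, h]

lemma card_filter_mem_powersetCard (B : Finset ℕ) {i : ℕ} (hi : i ∈ B) (r : ℕ) :
    ((B.powersetCard (r+1)).filter (fun S => i ∈ S)).card = (B.card - 1).choose r := by
  rw [filter_mem_powersetCard B hi r,
    card_image_of_injOn (insert_injOn_powersetCard _ _ _ (notMem_erase i B)),
    card_powersetCard, card_erase_of_mem hi]

lemma sum_powersetCard_sum {M : Type*} [AddCommMonoid M] (B : Finset ℕ) (r : ℕ) (f : ℕ → M) :
    ∑ S ∈ B.powersetCard (r+1), ∑ i ∈ S, f i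
      = (B.card - 1).choose r • ∑ i ∈ B, f i := by
  have h1 : ∀ S ∈ B.powersetCard (r+1), ∑ i ∈ S, f i
      = ∑ i ∈ B, if i ∈ S then f i else 0 := by
    intro S hS
    rw [Finset.sum_ite_mem, Finset.inter_eq_right.mpr (Finset.mem_powersetCard.mp hS).1]
  rw [Finset.sum_congr rfl h1, Finset.sum_comm, Finset.smul_sum]
  refine Finset.sum_congr rfl fun i hi => ?_
  rw [← Finset.sum_filter, Finset.sum_const, card_filter_mem_powersetCard B hi r]

/-- number of `s`-subsets containing two fixed distinct elements -/
def pairCount (n s : ℕ) : ℕ := if 2 ≤ s then (n-2).choose (s-2) else 0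

lemma card_filter_pair_powersetCard (B : Finset ℕ) {i j : ℕ} (hi : i ∈ B)
    (hj : j ∈ B) (hij : j ≠ i) (s : ℕ) :
    ((B.powersetCard s).filter (fun S => i ∈ S ∧ j ∈ S)).card = pairCount B.card s := by
  match s with
  | 0 =>
    rw [pairCount]
    simp only [show ¬ (2 ≤ 0) by omega, if_false]
    rw [Finset.card_eq_zero, Finset.filter_eq_empty_iff]
    intro S hS
    rw [mem_powersetCard] at hS
    rintro ⟨h1, h2⟩
    have : ({i} : Finset ℕ) ⊆ S := by simpa using h1
    have := Finset.card_le_card this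
    simp [hS.2] at this
  | 1 =>
    rw [pairCount]
    simp only [show ¬ (2 ≤ 1) by omega, if_false]
    rw [Finset.card_eq_zero, Finset.filter_eq_empty_iff]
    intro S hS
    rw [mem_powersetCard] at hS
    rintro ⟨h1, h2⟩
    have : ({j, i} : Finset ℕ) ⊆ S := by
      intro a ha; rcases Finset.mem_insert.mp ha with rfl|ha
      · exact h2
      · simpa using (Finset.mem_singleton.mp ha) ▸ h1
    have h3 := Finset.card_le_card this
    rw [Finset.card_insert_of_notMem (by simpa using hij), Finset.card_singleton, hS.2] at h3
    omega
  | (r+2) =>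
    have hjB : j ∈ B.erase i := Finset.mem_erase.mpr ⟨hij, hj⟩
    have e1 : (B.powersetCard (r+2)).filter (fun S => i ∈ S ∧ j ∈ S)
        = ((B.powersetCard (r+2)).filter (fun S => i ∈ S)).filter (fun S => j ∈ S) := by
      rw [Finset.filter_filter]
    rw [e1, filter_mem_powersetCard B hi (r+1), Finset.filter_image]
    have e2 : ((B.erase i).powersetCard (r+1)).filter (fun T => j ∈ insert i T)
        = ((B.erase i).powersetCard (r+1)).filter (fun T => j ∈ T) := by
      apply Finset.filter_congr
      intro T hT
      simp only [Finset.mem_insert]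
      constructor
      · rintro (rfl|h)
        · exact absurd rfl hij
        · exact h
      · exact Or.inr
    rw [e2, filter_mem_powersetCard (B.erase i) hjB r]
    rw [card_image_of_injOn, card_image_of_injOn
        (insert_injOn_powersetCard _ _ _ (notMem_erase j _)),
      card_powersetCard, card_erase_of_mem hjB, card_erase_of_mem hi, pairCount]
    · simp only [show 2 ≤ r + 2 by omega, if_true]
      have h1 : r + 2 - 2 = r := by omega
      have h2 : #B - 1 - 1 = #B - 2 := by omega
      rw [h1, h2]
    · -- InjOn (insert i) on image (insert j) of powersetCard r ((B.erase i).erase j)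
      intro S hS T hT h
      simp only [Finset.coe_image, Set.mem_image, Finset.mem_coe, mem_powersetCard] at hS hT
      obtain ⟨S', hS', rfl⟩ := hS
      obtain ⟨T', hT', rfl⟩ := hT
      have hiS : i ∉ insert j S' := by
        simp only [Finset.mem_insert]
        rintro (rfl|hm)
        · exact hij rfl
        · exact (Finset.mem_erase.mp (Finset.mem_erase.mp (hS'.1 hm)).2).1 rfl
      have hiT : i ∉ insert j T' := by
        simp only [Finset.mem_insert]
        rintro (rfl|hm)
        · exact hij rfl
        · exact (Finset.mem_erase.mp (Finset.mem_erase.mp (hT'.1 hm)).2).1 rfl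
      rw [← erase_insert hiS, ← erase_insert hiT, h]

lemma sum_powersetCard_pair (B : Finset ℕ) (s : ℕ) (f : ℕ → ℕ → ℝ) :
    ∑ S ∈ B.powersetCard s, ∑ i ∈ S, ∑ j ∈ S.erase i, f i j
      = (pairCount B.card s : ℝ) * ∑ i ∈ B, ∑ j ∈ B.erase i, f i j := by
  have h1 : ∀ S ∈ B.powersetCard s, ∑ i ∈ S, ∑ j ∈ S.erase i, f i j
      = ∑ i ∈ B, ∑ j ∈ B.erase i, if i ∈ S ∧ j ∈ S then f i j else 0 := by
    intro S hS
    have hSB := (Finset.mem_powersetCard.mp hS).1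
    have h2 : ∀ i, i ∈ S → ∑ j ∈ S.erase i, f i j
        = ∑ j ∈ B.erase i, if j ∈ S then f i j else 0 := by
      intro i hiS
      rw [Finset.sum_ite_mem]
      congr 1
      ext j
      simp only [Finset.mem_inter, Finset.mem_erase]
      constructor
      · rintro ⟨hji, hjS⟩; exact ⟨⟨hji, hSB hjS⟩, hjS⟩
      · rintro ⟨⟨hji, _⟩, hjS⟩; exact ⟨hji, hjS⟩
    calc ∑ i ∈ S, ∑ j ∈ S.erase i, f i j
        = ∑ i ∈ B, if i ∈ S then ∑ j ∈ S.erase i, f i j else 0 := by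
          rw [Finset.sum_ite_mem, Finset.inter_eq_right.mpr hSB]
      _ = ∑ i ∈ B, ∑ j ∈ B.erase i, if i ∈ S ∧ j ∈ S then f i j else 0 := by
          refine Finset.sum_congr rfl fun i hi => ?_
          by_cases hiS : i ∈ S
          · simp only [hiS, if_true, true_and]
            exact h2 i hiS
          · simp [hiS]
  rw [Finset.sum_congr rfl h1, Finset.sum_comm, Finset.mul_sum]
  refine Finset.sum_congr rfl fun i hi => ?_
  rw [Finset.sum_comm, Finset.mul_sum]
  refine Finset.sum_congr rfl fun j hj => ?_
  rw [← Finset.sum_filter, Finset.sum_const,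
    card_filter_pair_powersetCard B hi (Finset.mem_erase.mp hj).2 (Finset.mem_erase.mp hj).1 s,
    nsmul_eq_mul]

lemma norm_add_sq_le_two {E : Type*} [NormedAddCommGroup E] [InnerProductSpace ℝ E]
    (a b : E) : ‖a + b‖^2 ≤ 2*‖a‖^2 + 2*‖b‖^2 := by
  have h1 := norm_add_sq_real a b
  have h2 := real_inner_le_norm a b
  nlinarith [norm_nonneg a, norm_nonneg b, sq_nonneg (‖a‖ - ‖b‖)]

lemma norm_sum_sq_le_card {E : Type*} [NormedAddCommGroup E] [InnerProductSpace ℝ E]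
    {ι : Type*} (S : Finset ι) (w : ι → E) :
    ‖∑ i ∈ S, w i‖^2 ≤ (S.card : ℝ) * ∑ i ∈ S, ‖w i‖^2 := by
  calc ‖∑ i ∈ S, w i‖^2 ≤ (∑ i ∈ S, ‖w i‖)^2 :=
        pow_le_pow_left₀ (norm_nonneg _) (norm_sum_le S w) 2
    _ ≤ (S.card : ℝ) * ∑ i ∈ S, ‖w i‖^2 := by exact_mod_cast sq_sum_le_card_mul_sum_sq (f := fun i => ‖w i‖)

lemma final_arith (N s : ℕ) (hN : 2 ≤ N) (hs1 : 1 ≤ s) (hsN : s ≤ N)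
    (c c1 p2 T D G K σ2 L2 : ℝ)
    (hc : 0 < c) (hK : 0 < K)
    (hc1 : c1 * N = c * s)
    (hp2 : p2 * ((N:ℝ) * ((N:ℝ) - 1)) = c * ((s:ℝ) * ((s:ℝ) - 1)))
    (hp2c1 : p2 ≤ c1)
    (hT : 0 ≤ T) (hD0 : 0 ≤ D) (hDb : D ≤ N * σ2) (hG : 0 ≤ G) (hσ : 0 ≤ σ2)
    (hL2 : 0 ≤ L2) :
    (1/c) * (2*(1/(K*(s:ℝ)))*(c1*(L2*T)) + 2*(1/(s:ℝ)^2)*(c1*D - p2*D + c*(s:ℝ)^2*G))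
      ≤ 2*L2/(K*(N:ℝ))*T + 8*G + 4*(1-(s:ℝ)/N)/s*σ2 := by
  have hsR : (0:ℝ) < s := by exact_mod_cast hs1
  have hNR : (0:ℝ) < N := by positivity
  have hN2 : (2:ℝ) ≤ N := by exact_mod_cast hN
  have hβ : 0 ≤ c1 - p2 := by linarith
  have split : (1/c) * (2*(1/(K*(s:ℝ)))*(c1*(L2*T)) + 2*(1/(s:ℝ)^2)*(c1*D - p2*D + c*(s:ℝ)^2*G))
      = (1/c)*(2*(1/(K*(s:ℝ)))*(c1*(L2*T))) + (1/c)*(2*(1/(s:ℝ)^2)*((c1-p2)*D))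
        + (1/c)*(2*(1/(s:ℝ)^2)*(c*(s:ℝ)^2*G)) := by ring
  have e1 : (1/c)*(2*(1/(K*(s:ℝ)))*(c1*(L2*T))) = 2*L2/(K*(N:ℝ))*T := by
    have h : (1/c)*(2*(1/(K*(s:ℝ)))*(c1*(L2*T))) - 2*L2/(K*(N:ℝ))*T
        = (2*L2*T/(c*K*(s:ℝ)*(N:ℝ)))*(c1*N - c*s) := by
      field_simp
    have h2 := sub_eq_zero.mp (by rw [h, hc1, sub_self, mul_zero])
    linarith [h2]
  have e2 : (1/c)*(2*(1/(s:ℝ)^2)*(c*(s:ℝ)^2*G)) = 2*G := by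
    field_simp
  have key : (N:ℝ)*((N:ℝ)-1)*(c1-p2) = c*(s:ℝ)*((N:ℝ)-(s:ℝ)) := by
    linear_combination ((N:ℝ)-1)*hc1 - hp2
  have ineq3 : (1/c)*(2*(1/(s:ℝ)^2)*((c1-p2)*D)) ≤ 4*(1-(s:ℝ)/N)/s*σ2 := by
    have eL : (1/c)*(2*(1/(s:ℝ)^2)*((c1-p2)*D)) = 2*((c1-p2)*D)/(c*(s:ℝ)^2) := by
      field_simp
    have eR : 4*(1-(s:ℝ)/N)/s*σ2 = 4*(((N:ℝ)-(s:ℝ))*σ2)/((N:ℝ)*(s:ℝ)) := by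
      field_simp
    rw [eL, eR, div_le_div_iff₀ (by positivity) (by positivity)]
    have hmul := mul_le_mul_of_nonneg_left hDb
      (mul_nonneg (mul_nonneg (by norm_num : (0:ℝ) ≤ 2) hβ)
        (by positivity : (0:ℝ) ≤ (N:ℝ)*(s:ℝ)))
    have prod_nn : 0 ≤ σ2 * (s:ℝ) * (N:ℝ) * (c1 - p2) * ((N:ℝ) - 2) := by
      refine mul_nonneg (mul_nonneg (mul_nonneg (mul_nonneg hσ hsR.le) hNR.le) hβ) ?_
      linarith
    have e5 : 4*(((N:ℝ)-(s:ℝ))*σ2)*(c*(s:ℝ)^2) - 2*(c1-p2)*((N:ℝ)*(s:ℝ))*((N:ℝ)*σ2)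
        = 2*(σ2*(s:ℝ)*(N:ℝ)*(c1-p2)*((N:ℝ)-2)) := by
      linear_combination (-(4*σ2*(s:ℝ)))*key
    nlinarith [hmul, prod_nn, e5]
  rw [split, e1, e2]
  linarith [ineq3, hG]

lemma choose_id1 (N r : ℕ) (hN : 1 ≤ N) :
    (N-1).choose r * N = N.choose (r+1) * (r+1) := by
  have h := Nat.add_one_mul_choose_eq (N-1) r
  rw [show N - 1 + 1 = N from by omega] at h
  simpa [Nat.mul_comm] using h

lemma pair_id (N r : ℕ) (hN : 2 ≤ N) :
    pairCount N (r+1) * (N * (N-1)) = N.choose (r+1) * ((r+1) * r) := by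
  match r with
  | 0 => simp [pairCount]
  | (q+1) =>
    have h1 := Nat.add_one_mul_choose_eq (N-1) (q+1)
    have h2 := Nat.add_one_mul_choose_eq (N-2) q
    rw [show N - 1 + 1 = N from by omega] at h1
    rw [show N - 2 + 1 = N - 1 from by omega] at h2
    have hp : pairCount N (q+1+1) = (N-2).choose q := by simp [pairCount]
    rw [hp]
    calc (N-2).choose q * (N * (N-1)) = N * ((N-1) * (N-2).choose q) := by ring
      _ = N * ((N-1).choose (q+1) * (q+1)) := by rw [h2]
      _ = (N * (N-1).choose (q+1)) * (q+1) := by ring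
      _ = (N.choose (q+2) * (q+2)) * (q+1) := by rw [h1]
      _ = N.choose (q+1+1) * ((q+1+1) * (q+1)) := by ring

lemma pair_le (N r : ℕ) (hN : 2 ≤ N) : pairCount N (r+1) ≤ (N-1).choose r := by
  match r with
  | 0 => simp [pairCount]
  | (q+1) =>
    have hp : pairCount N (q+1+1) = (N-2).choose q := by simp [pairCount]
    rw [hp]
    have h : (N-1).choose (q+1) = (N-2).choose q + (N-2).choose (q+1) := by
      rw [show N-1 = (N-2)+1 from by omega]
      exact Nat.choose_succ_succ _ _
    omega

lemma inner_sum_sq_expand {E : Type*} [NormedAddCommGroup E] [InnerProductSpace ℝ E]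
    (S : Finset ℕ) (d : ℕ → E) :
    ‖∑ i ∈ S, d i‖^2 = (∑ i ∈ S, ‖d i‖^2)
      + ∑ i ∈ S, ∑ j ∈ S.erase i, (inner ℝ (d i) (d j) : ℝ) := by
  calc ‖∑ i ∈ S, d i‖^2 = (inner ℝ (∑ i ∈ S, d i) (∑ j ∈ S, d j) : ℝ) :=
        (real_inner_self_eq_norm_sq _).symm
    _ = ∑ i ∈ S, (inner ℝ (d i) (∑ j ∈ S, d j) : ℝ) := sum_inner S d _
    _ = ∑ i ∈ S, ∑ j ∈ S, (inner ℝ (d i) (d j) : ℝ) :=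
        Finset.sum_congr rfl fun i _ => inner_sum S d _
    _ = ∑ i ∈ S, ((inner ℝ (d i) (d i) : ℝ) + ∑ j ∈ S.erase i, (inner ℝ (d i) (d j) : ℝ)) :=
        Finset.sum_congr rfl fun i hi => (Finset.add_sum_erase S _ hi).symm
    _ = (∑ i ∈ S, ‖d i‖^2) + ∑ i ∈ S, ∑ j ∈ S.erase i, (inner ℝ (d i) (d j) : ℝ) := by
        rw [Finset.sum_add_distrib]
        congr 1
        exact Finset.sum_congr rfl fun i _ => real_inner_self_eq_norm_sq _

set_option maxHeartbeats 2000000 in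
/-- Partial-client-participation, exact-gradient form of Lemma D.5: with
`F := (1/N) ∑ᵢ Fᵢ`, `L`-Lipschitz gradients, bounded heterogeneity
`‖∇Fᵢ(y) − ∇F(y)‖² ≤ σ_g²` at `y`, and uniform sampling of `s`-element
client subsets without replacement,
`(1/C(N,s)) ∑_S ‖(1/(Ks)) ∑_{i∈S,k} ∇Fᵢ(x_{i,k})‖²
  ≤ (2L²/(KN)) ∑_{i,k} ‖x_{i,k} − y‖² + 8‖∇F(y)‖² + (4(1 − s/N)/s) σ_g²`. -/
theorem partial_participation_update_bound
    {E : Type*} [NormedAddCommGroup E] [InnerProductSpace ℝ E] [CompleteSpace E]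
    (N K s : ℕ) (hN : 2 ≤ N) (hK : 1 ≤ K) (hs1 : 1 ≤ s) (hsN : s ≤ N)
    (L σg : ℝ) (hL : 0 ≤ L) (hσg : 0 ≤ σg)
    (F : ℕ → E → ℝ)
    (hdiff : ∀ i ∈ Finset.Icc 1 N, Differentiable ℝ (F i))
    (hlip : ∀ i ∈ Finset.Icc 1 N, ∀ x y : E,
      ‖gradient (F i) x - gradient (F i) y‖ ≤ L * ‖x - y‖)
    (y : E)
    (hhet : ∀ i ∈ Finset.Icc 1 N,
      ‖gradient (F i) y -
        gradient (fun z => (N : ℝ)⁻¹ * ∑ j ∈ Finset.Icc 1 N, F j z) y‖ ^ 2 ≤ σg ^ 2)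
    (x : ℕ → ℕ → E) :
    (1 / (N.choose s : ℝ)) *
        ∑ S ∈ (Finset.Icc 1 N).powersetCard s,
          ‖(1 / ((K : ℝ) * s)) • ∑ i ∈ S, ∑ k ∈ Finset.Icc 1 K,
              gradient (F i) (x i k)‖ ^ 2 ≤
      (2 * L ^ 2 / ((K : ℝ) * N)) *
          ∑ i ∈ Finset.Icc 1 N, ∑ k ∈ Finset.Icc 1 K, ‖x i k - y‖ ^ 2 +
        8 * ‖gradient (fun z => (N : ℝ)⁻¹ * ∑ j ∈ Finset.Icc 1 N, F j z) y‖ ^ 2 +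
        (4 * (1 - (s : ℝ) / N) / s) * σg ^ 2 := by
  obtain ⟨r, rfl⟩ : ∃ r, s = r + 1 := ⟨s - 1, by omega⟩
  set A := Finset.Icc 1 N with hA
  have hAcard : A.card = N := by rw [hA, Nat.card_Icc]; omega
  have hKcard : (Finset.Icc 1 K).card = K := by rw [Nat.card_Icc]; omega
  set g := gradient (fun z => (N:ℝ)⁻¹ * ∑ j ∈ A, F j z) y with hgdef
  have hNR : (0:ℝ) < N := by exact_mod_cast (by omega : 0 < N)
  have hKR : (0:ℝ) < K := by exact_mod_cast hK
  have hsR : (0:ℝ) < ((r+1 : ℕ) : ℝ) := by exact_mod_cast Nat.succ_pos r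
  -- gradient of the average
  have hgrad : g = (N:ℝ)⁻¹ • ∑ i ∈ A, gradient (F i) y := by
    have hsum : HasFDerivAt (fun z => ∑ j ∈ A, F j z)
        (∑ j ∈ A, (InnerProductSpace.toDual ℝ E) (gradient (F j) y)) y :=
      HasFDerivAt.fun_sum (fun j hj => ((hdiff j hj).differentiableAt.hasGradientAt).hasFDerivAt)
    have hmul := hsum.const_mul ((N:ℝ)⁻¹)
    have hg2 : HasGradientAt (fun z => (N:ℝ)⁻¹ * ∑ j ∈ A, F j z)
        ((N:ℝ)⁻¹ • ∑ i ∈ A, gradient (F i) y) y := by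
      have heq : (InnerProductSpace.toDual ℝ E) ((N:ℝ)⁻¹ • ∑ i ∈ A, gradient (F i) y)
          = (N:ℝ)⁻¹ • ∑ j ∈ A, (InnerProductSpace.toDual ℝ E) (gradient (F j) y) := by
        simp [map_smul, map_sum]
      rw [hasGradientAt_iff_hasFDerivAt, heq]
      exact hmul
    rw [hgdef]
    exact hg2.gradient
  have hdsum : ∑ i ∈ A, (gradient (F i) y - g) = 0 := by
    rw [Finset.sum_sub_distrib, Finset.sum_const, hAcard, sub_eq_zero, hgrad,
      ← Nat.cast_smul_eq_nsmul ℝ, smul_smul,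
      mul_inv_cancel₀ (by positivity : (N:ℝ) ≠ 0), one_smul]
  -- abbreviations
  set T := ∑ i ∈ A, ∑ k ∈ Finset.Icc 1 K, ‖x i k - y‖ ^ 2 with hT
  set D := ∑ i ∈ A, ‖gradient (F i) y - g‖^2 with hD
  set G := ‖g‖^2 with hG
  set c1R : ℝ := ((N-1).choose r : ℝ) with hc1R
  set p2R : ℝ := (pairCount N (r+1) : ℝ) with hp2R
  set cR : ℝ := (N.choose (r+1) : ℝ) with hcR
  have hDb : D ≤ (N:ℝ) * σg^2 := by
    calc D ≤ ∑ _i ∈ A, σg^2 := Finset.sum_le_sum (fun i hi => hhet i hi)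
      _ = (N:ℝ) * σg^2 := by rw [Finset.sum_const, hAcard, nsmul_eq_mul]
  -- per-subset bound
  have step1 : ∀ S ∈ A.powersetCard (r+1),
      ‖(1 / ((K:ℝ) * ((r+1 : ℕ) : ℝ))) • ∑ i ∈ S, ∑ k ∈ Finset.Icc 1 K,
          gradient (F i) (x i k)‖ ^ 2
        ≤ 2*(1/((K:ℝ)*((r+1 : ℕ) : ℝ))) *
            (∑ i ∈ S, ∑ k ∈ Finset.Icc 1 K, L^2*‖x i k - y‖^2)
          + 2*(1/(((r+1 : ℕ) : ℝ))^2) * ‖∑ i ∈ S, gradient (F i) y‖^2 := by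
    intro S hS
    obtain ⟨hSA, hScard⟩ := Finset.mem_powersetCard.mp hS
    set c0 : ℝ := 1/((K:ℝ)*((r+1 : ℕ) : ℝ)) with hc0
    set U := ∑ i ∈ S, ∑ k ∈ Finset.Icc 1 K,
      (gradient (F i) (x i k) - gradient (F i) y) with hU
    set H := ∑ i ∈ S, gradient (F i) y with hH
    have hsplit : (∑ i ∈ S, ∑ k ∈ Finset.Icc 1 K, gradient (F i) (x i k))
        = U + (K:ℕ) • H := by
      rw [hU, hH, Finset.smul_sum, ← Finset.sum_add_distrib]
      refine Finset.sum_congr rfl fun i hi => ?_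
      have hconst : (K:ℕ) • gradient (F i) y
          = ∑ _k ∈ Finset.Icc 1 K, gradient (F i) y := by
        rw [Finset.sum_const, hKcard]
      rw [hconst, ← Finset.sum_add_distrib]
      refine Finset.sum_congr rfl fun k _ => ?_
      abel
    have hsmul : c0 • (∑ i ∈ S, ∑ k ∈ Finset.Icc 1 K, gradient (F i) (x i k))
        = c0 • U + (1/((r+1 : ℕ) : ℝ)) • H := by
      rw [hsplit, smul_add, ← Nat.cast_smul_eq_nsmul ℝ, smul_smul, hc0]
      congr 2
      field_simp
    have hUb : ‖U‖^2 ≤ ((r+1 : ℕ) : ℝ)*(K:ℝ)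
        * (∑ i ∈ S, ∑ k ∈ Finset.Icc 1 K, L^2*‖x i k - y‖^2) := by
      calc ‖U‖^2 ≤ (S.card : ℝ) * ∑ i ∈ S,
            ‖∑ k ∈ Finset.Icc 1 K, (gradient (F i) (x i k) - gradient (F i) y)‖^2 :=
            norm_sum_sq_le_card S _
        _ ≤ ((r+1 : ℕ) : ℝ) * ∑ i ∈ S, ((K:ℝ)
              * ∑ k ∈ Finset.Icc 1 K, ‖gradient (F i) (x i k) - gradient (F i) y‖^2) := by
            rw [hScard]
            refine mul_le_mul_of_nonneg_left (Finset.sum_le_sum fun i _ => ?_) (by positivity)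
            have h5 := norm_sum_sq_le_card (Finset.Icc 1 K)
              (fun k => gradient (F i) (x i k) - gradient (F i) y)
            rwa [hKcard] at h5
        _ = ((r+1 : ℕ) : ℝ)*(K:ℝ) * ∑ i ∈ S, ∑ k ∈ Finset.Icc 1 K,
              ‖gradient (F i) (x i k) - gradient (F i) y‖^2 := by
            rw [← Finset.mul_sum, ← mul_assoc]
        _ ≤ ((r+1 : ℕ) : ℝ)*(K:ℝ)
              * (∑ i ∈ S, ∑ k ∈ Finset.Icc 1 K, L^2*‖x i k - y‖^2) := by
            refine mul_le_mul_of_nonneg_left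
              (Finset.sum_le_sum fun i hi => Finset.sum_le_sum fun k _ => ?_) (by positivity)
            have hl := hlip i (hSA hi) (x i k) y
            calc ‖gradient (F i) (x i k) - gradient (F i) y‖^2 ≤ (L*‖x i k - y‖)^2 :=
                  pow_le_pow_left₀ (norm_nonneg _) hl 2
              _ = L^2*‖x i k - y‖^2 := by ring
    have hcsq : c0^2*(((r+1 : ℕ) : ℝ)*(K:ℝ)) = c0 := by
      rw [hc0]; field_simp
    calc ‖(1 / ((K:ℝ) * ((r+1 : ℕ) : ℝ))) • ∑ i ∈ S, ∑ k ∈ Finset.Icc 1 K,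
            gradient (F i) (x i k)‖ ^ 2
        = ‖c0 • U + (1/((r+1 : ℕ) : ℝ)) • H‖^2 := by rw [← hc0, hsmul]
      _ ≤ 2*‖c0 • U‖^2 + 2*‖(1/((r+1 : ℕ) : ℝ)) • H‖^2 := norm_add_sq_le_two _ _
      _ = 2*c0^2*‖U‖^2 + 2*(1/((r+1 : ℕ) : ℝ))^2*‖H‖^2 := by
          rw [norm_smul, norm_smul, mul_pow, mul_pow, Real.norm_eq_abs, Real.norm_eq_abs,
            sq_abs, sq_abs]
          ring
      _ ≤ 2*c0^2*(((r+1 : ℕ) : ℝ)*(K:ℝ)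
            * (∑ i ∈ S, ∑ k ∈ Finset.Icc 1 K, L^2*‖x i k - y‖^2))
            + 2*(1/((r+1 : ℕ) : ℝ))^2*‖H‖^2 := by
          have h6 := mul_le_mul_of_nonneg_left hUb (by positivity : (0:ℝ) ≤ 2*c0^2)
          linarith [h6]
      _ = 2*(1/((K:ℝ)*((r+1 : ℕ) : ℝ)))
            * (∑ i ∈ S, ∑ k ∈ Finset.Icc 1 K, L^2*‖x i k - y‖^2)
            + 2*(1/(((r+1 : ℕ) : ℝ))^2) * ‖∑ i ∈ S, gradient (F i) y‖^2 := by
          rw [← hc0, ← hH]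
          have h7 : 2*c0^2*(((r+1 : ℕ) : ℝ)*(K:ℝ)
              * (∑ i ∈ S, ∑ k ∈ Finset.Icc 1 K, L^2*‖x i k - y‖^2))
              = 2*(c0^2*(((r+1 : ℕ) : ℝ)*(K:ℝ)))
              * (∑ i ∈ S, ∑ k ∈ Finset.Icc 1 K, L^2*‖x i k - y‖^2) := by ring
          rw [h7, hcsq]
          ring
  -- sum over subsets: combinatorial identities
  have hQ : ∑ S ∈ A.powersetCard (r+1), ∑ i ∈ S, (∑ k ∈ Finset.Icc 1 K, L^2*‖x i k - y‖^2)
      = c1R * ∑ i ∈ A, (∑ k ∈ Finset.Icc 1 K, L^2*‖x i k - y‖^2) := by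
    have h := sum_powersetCard_sum A r (fun i => ∑ k ∈ Finset.Icc 1 K, L^2*‖x i k - y‖^2)
    rw [hAcard] at h
    rw [h, nsmul_eq_mul, hc1R]
  have hQ2 : ∑ i ∈ A, (∑ k ∈ Finset.Icc 1 K, L^2*‖x i k - y‖^2) = L^2 * T := by
    rw [hT, Finset.mul_sum]
    exact Finset.sum_congr rfl fun i _ => (Finset.mul_sum _ _ _).symm
  have hHsum : ∑ S ∈ A.powersetCard (r+1), ‖∑ i ∈ S, gradient (F i) y‖^2
      = c1R*D - p2R*D + cR*((r+1 : ℕ) : ℝ)^2*G := by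
    have hper : ∀ S ∈ A.powersetCard (r+1), ‖∑ i ∈ S, gradient (F i) y‖^2
        = ((∑ i ∈ S, ‖gradient (F i) y - g‖^2)
            + ∑ i ∈ S, ∑ j ∈ S.erase i,
                (inner ℝ (gradient (F i) y - g) (gradient (F j) y - g) : ℝ))
          + 2 * (inner ℝ (∑ i ∈ S, (gradient (F i) y - g)) (((r+1 : ℕ) : ℝ) • g) : ℝ)
          + ((r+1 : ℕ) : ℝ)^2 * G := by
      intro S hS
      obtain ⟨hSA, hScard⟩ := Finset.mem_powersetCard.mp hS
      have hsplit : ∑ i ∈ S, gradient (F i) y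
          = (∑ i ∈ S, (gradient (F i) y - g)) + ((r+1 : ℕ) : ℝ) • g := by
        rw [Finset.sum_sub_distrib, Finset.sum_const, hScard, ← Nat.cast_smul_eq_nsmul ℝ]
        abel
      rw [hsplit, norm_add_sq_real, inner_sum_sq_expand S (fun i => gradient (F i) y - g)]
      have hsm : ‖((r+1 : ℕ) : ℝ) • g‖^2 = ((r+1 : ℕ) : ℝ)^2 * G := by
        rw [norm_smul, mul_pow, Real.norm_eq_abs, sq_abs, hG]
      rw [hsm]
    rw [Finset.sum_congr rfl hper, Finset.sum_add_distrib, Finset.sum_add_distrib,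
      Finset.sum_add_distrib]
    have p1 : ∑ S ∈ A.powersetCard (r+1), ∑ i ∈ S, ‖gradient (F i) y - g‖^2 = c1R * D := by
      have h := sum_powersetCard_sum A r (fun i => ‖gradient (F i) y - g‖^2)
      rw [hAcard] at h
      rw [h, nsmul_eq_mul, hc1R, hD]
    have p2 : ∑ S ∈ A.powersetCard (r+1), ∑ i ∈ S, ∑ j ∈ S.erase i,
        (inner ℝ (gradient (F i) y - g) (gradient (F j) y - g) : ℝ) = p2R * (-D) := by
      have h := sum_powersetCard_pair A (r+1)
        (fun i j => (inner ℝ (gradient (F i) y - g) (gradient (F j) y - g) : ℝ))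
      rw [hAcard] at h
      rw [h, hp2R]
      congr 1
      have hexp := inner_sum_sq_expand A (fun i => gradient (F i) y - g)
      rw [hdsum] at hexp
      simp only [norm_zero] at hexp
      rw [hD]
      linarith [hexp]
    have p3 : ∑ S ∈ A.powersetCard (r+1),
        2 * (inner ℝ (∑ i ∈ S, (gradient (F i) y - g)) (((r+1 : ℕ) : ℝ) • g) : ℝ) = 0 := by
      have h8 : ∑ S ∈ A.powersetCard (r+1), ∑ i ∈ S, (gradient (F i) y - g) = 0 := by
        have h := sum_powersetCard_sum A r (fun i => gradient (F i) y - g)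
        rw [hAcard] at h
        rw [h, hdsum, smul_zero]
      rw [← Finset.mul_sum, ← sum_inner, h8, inner_zero_left, mul_zero]
    have p4 : ∑ _S ∈ A.powersetCard (r+1), ((r+1 : ℕ) : ℝ)^2*G
        = cR*((r+1 : ℕ) : ℝ)^2*G := by
      rw [Finset.sum_const, card_powersetCard, hAcard, nsmul_eq_mul, hcR]
      ring
    rw [p1, p2, p3, p4]
    ring
  -- combine
  have hsum1 : ∑ S ∈ A.powersetCard (r+1),
      ‖(1 / ((K:ℝ) * ((r+1 : ℕ) : ℝ))) • ∑ i ∈ S, ∑ k ∈ Finset.Icc 1 K,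
          gradient (F i) (x i k)‖ ^ 2
      ≤ 2*(1/((K:ℝ)*((r+1 : ℕ) : ℝ)))*(c1R*(L^2*T))
        + 2*(1/(((r+1 : ℕ) : ℝ))^2)*(c1R*D - p2R*D + cR*((r+1 : ℕ) : ℝ)^2*G) := by
    calc ∑ S ∈ A.powersetCard (r+1),
        ‖(1 / ((K:ℝ) * ((r+1 : ℕ) : ℝ))) • ∑ i ∈ S, ∑ k ∈ Finset.Icc 1 K,
            gradient (F i) (x i k)‖ ^ 2
        ≤ ∑ S ∈ A.powersetCard (r+1),
            (2*(1/((K:ℝ)*((r+1 : ℕ) : ℝ))) *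
              (∑ i ∈ S, ∑ k ∈ Finset.Icc 1 K, L^2*‖x i k - y‖^2)
              + 2*(1/(((r+1 : ℕ) : ℝ))^2) * ‖∑ i ∈ S, gradient (F i) y‖^2) :=
          Finset.sum_le_sum step1
      _ = 2*(1/((K:ℝ)*((r+1 : ℕ) : ℝ))) * (∑ S ∈ A.powersetCard (r+1), ∑ i ∈ S,
              (∑ k ∈ Finset.Icc 1 K, L^2*‖x i k - y‖^2))
            + 2*(1/(((r+1 : ℕ) : ℝ))^2) * (∑ S ∈ A.powersetCard (r+1),
              ‖∑ i ∈ S, gradient (F i) y‖^2) := by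
          rw [Finset.sum_add_distrib, ← Finset.mul_sum, ← Finset.mul_sum]
      _ = 2*(1/((K:ℝ)*((r+1 : ℕ) : ℝ)))*(c1R*(L^2*T))
            + 2*(1/(((r+1 : ℕ) : ℝ))^2)*(c1R*D - p2R*D + cR*((r+1 : ℕ) : ℝ)^2*G) := by
          rw [hQ, hQ2, hHsum]
  -- final numeric assembly
  have hcpos : (0:ℝ) < cR := by
    rw [hcR]
    exact_mod_cast Nat.choose_pos hsN
  have hc1id : c1R * (N:ℝ) = cR * ((r+1 : ℕ) : ℝ) := by
    rw [hc1R, hcR]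
    exact_mod_cast choose_id1 N r (by omega)
  have hp2id : p2R * ((N:ℝ) * ((N:ℝ) - 1))
      = cR * (((r+1 : ℕ) : ℝ) * (((r+1 : ℕ) : ℝ) - 1)) := by
    have h := pair_id N r hN
    have h2 : ((pairCount N (r+1) : ℕ) : ℝ) * ((N:ℝ) * (((N - 1 : ℕ) : ℕ) : ℝ))
        = ((N.choose (r+1) : ℕ) : ℝ) * (((r+1 : ℕ) : ℝ) * ((r : ℕ) : ℝ)) := by
      exact_mod_cast h
    rw [Nat.cast_sub (by omega : 1 ≤ N)] at h2
    rw [hp2R, hcR]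
    push_cast at h2 ⊢
    linarith [h2]
  have hple : p2R ≤ c1R := by
    rw [hp2R, hc1R]
    exact_mod_cast pair_le N r hN
  have hT0 : 0 ≤ T := by
    rw [hT]
    positivity
  have hD0 : 0 ≤ D := by
    rw [hD]
    positivity
  have hG0 : 0 ≤ G := by
    rw [hG]
    positivity
  have hfin := final_arith N (r+1) hN hs1 hsN cR c1R p2R T D G (K:ℝ) (σg^2) (L^2)
    hcpos hKR hc1id hp2id hple hT0 hD0 hDb hG0 (by positivity) (by positivity)
  exact le_trans (mul_le_mul_of_nonneg_left hsum1 (one_div_nonneg.mpr hcpos.le)) hfin
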